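/- For every a ≠ 0 and all h, r ∈ ℝ, the series defining Ψ converges absolutely: ∑_{k ∈ ℤ} |ψ(a(k − r) + h) − ψ(a(k − r))| < ∞. -/

import Mathlib

open MeasureTheory Real Filter

noncomputable def psiF (w : ℝ → ℝ) (q : ℝ) : ℝ :=
  (1/2) * ∫ p in Set.Ioi (0:ℝ), w (q + p) * p ^ (-(1/2) : ℝ)

noncomputable def PsiF (w : ℝ → ℝ) (h a r : ℝ) : ℝ :=
  if a = 0 then 0
  else ∑' k : ℤ, (psiF w (a * ((k : ℝ) - r) + h) - psiF w (a * ((k : ℝ) - r)))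

/-- The kernel `t ↦ t^{-1/2}` for `t > 0`, extended by zero. -/
noncomputable def gker (t : ℝ) : ℝ := if 0 < t then t ^ (-(1/2) : ℝ) else 0

lemma gker_measurable : Measurable gker := by
  unfold gker
  exact Measurable.ite measurableSet_Ioi (by fun_prop) measurable_const

lemma gker_nonneg (t : ℝ) : 0 ≤ gker t := by
  unfold gker
  split
  · positivity
  · exact le_rfl

lemma gker_le_one {t : ℝ} (ht : 1 ≤ t) : gker t ≤ 1 := by
  rw [gker, if_pos (by linarith)]
  calc t ^ (-(1/2) : ℝ) ≤ 1 ^ (-(1/2) : ℝ) :=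
        Real.rpow_le_rpow_of_nonpos one_pos ht (by norm_num)
    _ = 1 := Real.one_rpow _

lemma gker_sub_le {m u v : ℝ} (hm : 0 < m) (hu : m ≤ u) (hv : m ≤ v) :
    |gker u - gker v| ≤ 1/2 * m ^ (-(3/2) : ℝ) * |u - v| := by
  have hset : ∀ x ∈ Set.Ici m, HasDerivWithinAt (fun t : ℝ => t ^ (-(1/2) : ℝ))
      ((-(1/2) : ℝ) * x ^ (-(1/2) - 1 : ℝ)) (Set.Ici m) x := by
    intro x hx
    have hx' : m ≤ x := hx
    exact (Real.hasDerivAt_rpow_const (Or.inl (hm.trans_le hx').ne')).hasDerivWithinAt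
  have hbound : ∀ x ∈ Set.Ici m, ‖(-(1/2) : ℝ) * x ^ (-(1/2) - 1 : ℝ)‖ ≤
      1/2 * m ^ (-(3/2) : ℝ) := by
    intro x hx
    have hx' : m ≤ x := hx
    have hxpos : 0 < x := lt_of_lt_of_le hm hx'
    rw [norm_mul, Real.norm_eq_abs, Real.norm_eq_abs,
      abs_of_nonneg (Real.rpow_nonneg hxpos.le _)]
    have h1 : |(-(1/2) : ℝ)| = 1/2 := by norm_num
    have h2 : (-(1/2) - 1 : ℝ) = -(3/2) := by norm_num
    rw [h1, h2]
    have := Real.rpow_le_rpow_of_nonpos hm hx' (by norm_num : (-(3/2) : ℝ) ≤ 0)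
    linarith
  have key := (convex_Ici m).norm_image_sub_le_of_norm_hasDerivWithin_le hset hbound
    (Set.mem_Ici.mpr hv) (Set.mem_Ici.mpr hu)
  rw [Real.norm_eq_abs, Real.norm_eq_abs] at key
  rwa [gker, gker, if_pos (lt_of_lt_of_le hm hu), if_pos (lt_of_lt_of_le hm hv)]

/-- Representation of `psiF` as an integral over all of `ℝ`. -/
lemma psiF_rep (w : ℝ → ℝ) (x : ℝ) :
    psiF w x = (1/2) * ∫ y, w y * gker (y - x) := by
  unfold psiF
  congr 1
  have h1 : ∫ p in Set.Ioi (0:ℝ), w (x + p) * p ^ (-(1/2) : ℝ)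
      = ∫ p in Set.Ioi (0:ℝ), w (x + p) * gker p :=
    setIntegral_congr_fun measurableSet_Ioi
      (fun p hp => by rw [gker, if_pos (Set.mem_Ioi.mp hp)])
  rw [h1, setIntegral_eq_integral_of_forall_compl_eq_zero
    (fun p hp => by rw [gker, if_neg (by simpa using hp), mul_zero])]
  have h2 := MeasureTheory.integral_add_left_eq_self (μ := volume)
    (fun y => w y * gker (y - x)) x
  simpa using h2

/-- The main estimate in the regime where `a > 0`. -/
lemma summable_pos (w : ℝ → ℝ) (hwSupp : HasCompactSupport w) (hwCont : Continuous w)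
    (a : ℝ) (ha : 0 < a) (h r : ℝ) :
    Summable (fun k : ℤ => |psiF w (a * ((k : ℝ) - r) + h) - psiF w (a * ((k : ℝ) - r))|) := by
  obtain ⟨M₀, hM₀⟩ := (hwSupp.isBounded).subset_closedBall 0
  set M : ℝ := |M₀| with hMdef
  have hM0 : 0 ≤ M := abs_nonneg _
  have hMsupp : ∀ y : ℝ, w y ≠ 0 → |y| ≤ M := by
    intro y hy
    have : y ∈ Metric.closedBall 0 M₀ :=
      hM₀ (subset_tsupport w (Function.mem_support.mpr hy))
    rw [Metric.mem_closedBall, Real.dist_eq, sub_zero] at this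
    exact this.trans (le_abs_self _)
  have hwI : Integrable w := hwCont.integrable_of_hasCompactSupport hwSupp
  -- measurability of the integrands
  have hgm : ∀ x : ℝ, AEStronglyMeasurable (fun y => w y * gker (y - x)) volume :=
    fun x => hwCont.aestronglyMeasurable.mul
      ((gker_measurable.comp (measurable_id.sub measurable_const)).aestronglyMeasurable)
  -- integrability in the relevant regime
  have hint : ∀ x : ℝ, x ≤ -(M + 1) → Integrable (fun y => w y * gker (y - x)) := by
    intro x hx
    refine hwI.abs.mono' (hgm x) (Filter.Eventually.of_forall fun y => ?_)
    rw [Real.norm_eq_abs, abs_mul]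
    rcases eq_or_ne (w y) 0 with hy | hy
    · simp [hy]
    · have h1 : (1 : ℝ) ≤ y - x := by
        have := (abs_le.mp (hMsupp y hy)).1
        linarith
      calc |w y| * |gker (y - x)| ≤ |w y| * 1 := by
            refine mul_le_mul_of_nonneg_left ?_ (abs_nonneg _)
            rw [abs_of_nonneg (gker_nonneg _)]
            exact gker_le_one h1
        _ = |w y| := mul_one _
  -- vanishing of psiF on the right
  have hzero : ∀ x : ℝ, M ≤ x → psiF w x = 0 := by
    intro x hx
    unfold psiF
    rw [setIntegral_congr_fun measurableSet_Ioi (g := fun _ => (0:ℝ)), integral_zero, mul_zero]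
    intro p hp
    have hp' : 0 < p := Set.mem_Ioi.mp hp
    have : w (x + p) = 0 := by
      by_contra hw
      have := hMsupp _ hw
      have : x + p ≤ M := (le_abs_self _).trans this
      linarith
    dsimp only
    rw [this, zero_mul]
  -- the key decay bound
  set C : ℝ := (∫ y, |w y|) * |h| with hCdef
  have hC0 : 0 ≤ C := mul_nonneg (integral_nonneg fun y => abs_nonneg _) (abs_nonneg _)
  have hdiff : ∀ x : ℝ, x ≤ -(M + |h| + 1) →
      |psiF w (x + h) - psiF w x| ≤ C * (-x - M - |h|) ^ (-(3/2) : ℝ) := by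
    intro x hx
    set m : ℝ := -x - M - |h| with hmdef
    have hm1 : 1 ≤ m := by simp only [hmdef]; linarith
    have hm0 : 0 < m := lt_of_lt_of_le one_pos hm1
    have hxh : x + h ≤ -(M + 1) := by
      have := le_abs_self h
      linarith
    have hx1 : x ≤ -(M + 1) := by linarith [abs_nonneg h]
    have hI1 := hint (x + h) hxh
    have hI2 := hint x hx1
    rw [psiF_rep, psiF_rep, ← mul_sub, ← integral_sub hI1 hI2]
    have hptwise : ∀ y : ℝ,
        |w y * gker (y - (x + h)) - w y * gker (y - x)| ≤
          |w y| * (1/2 * m ^ (-(3/2) : ℝ) * |h|) := by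
      intro y
      rw [← mul_sub, abs_mul]
      rcases eq_or_ne (w y) 0 with hy | hy
      · simp only [hy, abs_zero, zero_mul]
        positivity
      · refine mul_le_mul_of_nonneg_left ?_ (abs_nonneg _)
        have hyM := abs_le.mp (hMsupp y hy)
        have h1 : m ≤ y - (x + h) := by
          have := le_abs_self h
          simp only [hmdef]; linarith [hyM.1]
        have h2 : m ≤ y - x := by
          simp only [hmdef]; linarith [hyM.1, abs_nonneg h]
        have := gker_sub_le hm0 h1 h2
        have harg : |y - (x + h) - (y - x)| = |h| := by
          rw [show y - (x + h) - (y - x) = -h by ring, abs_neg]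
        rwa [harg] at this
    have habs : |∫ y, (w y * gker (y - (x + h)) - w y * gker (y - x))| ≤
        ∫ y, |w y| * (1/2 * m ^ (-(3/2) : ℝ) * |h|) := by
      have h0 : |∫ y, (w y * gker (y - (x + h)) - w y * gker (y - x))| ≤
          ∫ y, |w y * gker (y - (x + h)) - w y * gker (y - x)| := by
        simpa [Real.norm_eq_abs] using
          norm_integral_le_integral_norm (fun y => w y * gker (y - (x + h)) - w y * gker (y - x))
      exact h0.trans (integral_mono (hI1.sub hI2).abs
        (hwI.abs.mul_const _) hptwise)
    rw [abs_mul]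
    have hval : ∫ y, |w y| * (1/2 * m ^ (-(3/2) : ℝ) * |h|) =
        (∫ y, |w y|) * (1/2 * m ^ (-(3/2) : ℝ) * |h|) := integral_mul_const _ _
    have hrpow : (0:ℝ) ≤ m ^ (-(3/2) : ℝ) := Real.rpow_nonneg hm0.le _
    have hintw : (0:ℝ) ≤ ∫ y, |w y| := integral_nonneg fun y => abs_nonneg _
    calc |(1/2 : ℝ)| * |∫ y, (w y * gker (y - (x + h)) - w y * gker (y - x))|
        ≤ 1 * ((∫ y, |w y|) * (1/2 * m ^ (-(3/2) : ℝ) * |h|)) := by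
          rw [hval] at habs
          refine mul_le_mul (by rw [abs_of_nonneg] <;> norm_num) habs (abs_nonneg _) one_pos.le
      _ ≤ C * m ^ (-(3/2) : ℝ) := by
          rw [one_mul, hCdef]
          nlinarith [abs_nonneg h, mul_nonneg hintw (abs_nonneg h)]
  -- summability via comparison
  set D : ℝ := C * (a/2) ^ (-(3/2) : ℝ) with hDdef
  have hD0 : 0 ≤ D := mul_nonneg hC0 (Real.rpow_nonneg (by positivity) _)
  refine Summable.of_norm_bounded_eventually
    (g := fun k : ℤ => D * |(k:ℝ)| ^ (-(3/2) : ℝ))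
    ((Real.summable_abs_int_rpow (by norm_num : (1:ℝ) < 3/2)).mul_left D) ?_
  rw [Int.cofinite_eq, eventually_sup]
  constructor
  · -- atBot : use the decay bound
    have hev1 : ∀ᶠ k : ℤ in atBot, a * ((k:ℝ) - r) ≤ -(M + |h| + 1) := by
      have hlim : Tendsto (fun k : ℤ => a * ((k:ℝ) - r)) atBot atBot := by
        refine (tendsto_const_mul_atBot_of_pos ha).2 ?_
        have : Tendsto (fun k : ℤ => (k:ℝ)) atBot atBot := tendsto_intCast_atBot_iff.2 tendsto_id
        simpa [sub_eq_add_neg] using tendsto_atBot_add_const_right atBot (-r) this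
      exact hlim.eventually (eventually_le_atBot _)
    have hev2 : ∀ᶠ k : ℤ in atBot, a/2 * |(k:ℝ)| ≤ -(a * ((k:ℝ) - r)) - M - |h| := by
      have hlim : Tendsto (fun k : ℤ => (-(a * ((k:ℝ) - r)) - M - |h|) - a/2 * (-(k:ℝ)))
          atBot atTop := by
        have : (fun k : ℤ => (-(a * ((k:ℝ) - r)) - M - |h|) - a/2 * (-(k:ℝ)))
            = fun k : ℤ => -(a/2) * (k:ℝ) + (a * r - M - |h|) := by
          funext k; ring
        rw [this]
        refine tendsto_atTop_add_const_right atBot _ ?_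
        refine (tendsto_const_mul_atTop_of_neg (by linarith)).2 ?_
        exact tendsto_intCast_atBot_iff.2 tendsto_id
      filter_upwards [hlim.eventually (eventually_ge_atTop 0),
        eventually_le_atBot (0:ℤ)] with k hk hk0
      have hcast : ((k:ℝ)) ≤ 0 := by exact_mod_cast hk0
      rw [abs_of_nonpos hcast]
      linarith
    filter_upwards [hev1, hev2, eventually_lt_atBot (0:ℤ)] with k hk1 hk2 hk0
    set x := a * ((k:ℝ) - r) with hxdef
    have hkne : ((k:ℝ)) ≠ 0 := by exact_mod_cast hk0.ne
    have hkabs : 0 < |(k:ℝ)| := abs_pos.mpr hkne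
    have hfin : C * (-x - M - |h|) ^ (-(3/2) : ℝ) ≤ D * |(k:ℝ)| ^ (-(3/2) : ℝ) := by
      have hmono : (-x - M - |h|) ^ (-(3/2) : ℝ) ≤ (a/2 * |(k:ℝ)|) ^ (-(3/2) : ℝ) :=
        Real.rpow_le_rpow_of_nonpos (mul_pos (by positivity) hkabs) hk2 (by norm_num)
      have hsplit : (a/2 * |(k:ℝ)|) ^ (-(3/2) : ℝ)
          = (a/2) ^ (-(3/2) : ℝ) * |(k:ℝ)| ^ (-(3/2) : ℝ) :=
        Real.mul_rpow (by positivity) (abs_nonneg _)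
      calc C * (-x - M - |h|) ^ (-(3/2) : ℝ)
          ≤ C * ((a/2) ^ (-(3/2) : ℝ) * |(k:ℝ)| ^ (-(3/2) : ℝ)) := by
            rw [← hsplit]
            exact mul_le_mul_of_nonneg_left hmono hC0
        _ = D * |(k:ℝ)| ^ (-(3/2) : ℝ) := by rw [hDdef]; ring
    rw [Real.norm_eq_abs, abs_abs]
    exact (hdiff x hk1).trans hfin
  · -- atTop : psiF vanishes
    have hlim : Tendsto (fun k : ℤ => a * ((k:ℝ) - r)) atTop atTop := by
      refine Tendsto.const_mul_atTop ha ?_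
      have : Tendsto (fun k : ℤ => (k:ℝ)) atTop atTop := tendsto_intCast_atTop_atTop
      simpa [sub_eq_add_neg] using tendsto_atTop_add_const_right atTop (-r) this
    filter_upwards [hlim.eventually (eventually_ge_atTop (M + |h|))] with k hk
    set x := a * ((k:ℝ) - r) with hxdef
    have h1 : psiF w (x + h) = 0 := hzero _ (by have := neg_abs_le h; linarith)
    have h2 : psiF w x = 0 := hzero _ (by have := abs_nonneg h; linarith)
    rw [Real.norm_eq_abs, abs_abs, h1, h2, sub_zero, abs_zero]
    positivity

theorem stmt_9 (w : ℝ → ℝ) (hwSupp : HasCompactSupport w)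
    (hwInt : ∫ p, w p = 1)
    (q : ℝ) (hq : 2 < q) (w' : ℝ → ℝ)
    (hw'Lq : MemLp w' (ENNReal.ofReal q) volume)
    (hwAC : ∀ x : ℝ, w x = w 0 + ∫ t in (0:ℝ)..x, w' t) :
    ∀ (a : ℝ), a ≠ 0 → ∀ (h r : ℝ),
      Summable (fun k : ℤ => |psiF w (a * ((k : ℝ) - r) + h) - psiF w (a * ((k : ℝ) - r))|) := by
  -- w is continuous, being a primitive of a locally integrable function
  have hw'int : ∀ u v : ℝ, IntervalIntegrable w' volume u v := by
    intro u v
    have h1 : MemLp w' (ENNReal.ofReal q) (volume.restrict (Set.Icc (u ⊓ v) (u ⊔ v))) :=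
      hw'Lq.restrict _
    have h2 : MemLp w' 1 (volume.restrict (Set.Icc (u ⊓ v) (u ⊔ v))) :=
      h1.mono_exponent (by
        rw [ENNReal.one_le_ofReal]
        linarith)
    have h3 : IntegrableOn w' (Set.Icc (u ⊓ v) (u ⊔ v)) volume :=
      memLp_one_iff_integrable.mp h2
    rw [intervalIntegrable_iff]
    exact h3.mono_set Set.uIoc_subset_uIcc
  have hwCont : Continuous w := by
    have h1 : Continuous fun x : ℝ => w 0 + ∫ t in (0:ℝ)..x, w' t :=
      continuous_const.add (intervalIntegral.continuous_primitive (fun u v => hw'int u v) 0)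
    exact h1.congr fun x => (hwAC x).symm
  intro a ha h r
  rcases lt_or_gt_of_ne ha with haneg | hapos
  · -- reduce to the positive case via `k ↦ -k`
    have hsum := summable_pos w hwSupp hwCont (-a) (by linarith) h (-r)
    have hsum2 := (Equiv.neg ℤ).summable_iff.mpr hsum
    refine (summable_congr fun k : ℤ => ?_).mpr hsum2
    have harg : (-a) * (((Equiv.neg ℤ k : ℤ) : ℝ) - -r) = a * ((k:ℝ) - r) := by
      simp only [Equiv.neg_apply]
      push_cast
      ring
    simp only [Function.comp_apply, harg]
  · exact summable_pos w hwSupp hwCont a hapos h r
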